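/- Let p be a prime, k, r, λ, m positive integers with m ≥ λ, and ζ_k a primitive k-th root of unity. Then in the ring ℤ[ζ_k][[q]], the power series (1 - (ζ_k - q)^(k·r·p))^m is congruent modulo p^λ to a power series whose q-order is at least λ - 1 + p(m - λ - 1). -/

import Mathlib

open PowerSeries Finset

/-- Lemma 4.8: in `R⟦q⟧` with `R = ℤ[ζ_k]` (formalized as any commutative ring
containing a primitive `k`-th root of unity `ζ`), for `m ≥ λ` the power series
`(1 - (ζ - q)^(krp))^m` is congruent modulo `p^λ` to a series of `q`-order at
least `λ - 1 + p(m - λ - 1)`; i.e. every coefficient of index below that bound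
is divisible by `p^λ`. -/
theorem stmt_14 (R : Type*) [CommRing R] (p k r m lam : ℕ) (hp : p.Prime)
    (hk : 0 < k) (hr : 0 < r) (hlam : 0 < lam) (hm : lam ≤ m)
    (ζ : R) (hζ : IsPrimitiveRoot ζ k) :
    ∀ n : ℕ, (n : ℤ) < (lam : ℤ) - 1 + p * ((m : ℤ) - lam - 1) →
      (p : R) ^ lam ∣ PowerSeries.coeff (R := R) n
        ((1 - (PowerSeries.C (R := R) ζ - PowerSeries.X) ^ (k * r * p)) ^ m) := by
  intro n hn
  classical
  have hp2 : 2 ≤ p := hp.two_le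
  set A : PowerSeries R := (PowerSeries.C (R := R) ζ - PowerSeries.X) ^ (k * r) with hA
  have hA1 : PowerSeries.constantCoeff (R := R) (A - 1) = 0 := by
    simp [hA, pow_mul, hζ.pow_eq_one]
  obtain ⟨B, hB⟩ := PowerSeries.X_dvd_iff.mpr hA1
  have hAeq : A = PowerSeries.X * B + 1 := by
    rw [← hB]; ring
  -- decomposition 1 - (C ζ - X)^(krp) = p * X * f + X^p * g
  obtain ⟨f, g, hfg⟩ : ∃ f g : PowerSeries R,
      1 - (PowerSeries.C (R := R) ζ - PowerSeries.X) ^ (k * r * p)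
        = (p : PowerSeries R) * PowerSeries.X * f + PowerSeries.X ^ p * g := by
    refine ⟨-∑ i ∈ range (p - 1),
        (PowerSeries.X * B) ^ i * B * ((p.choose (i + 1) / p : ℕ) : PowerSeries R),
      -(B ^ p), ?_⟩
    have hAp : (PowerSeries.C (R := R) ζ - PowerSeries.X) ^ (k * r * p) = A ^ p := by
      rw [hA, ← pow_mul]
    rw [hAp, hAeq, add_pow]
    simp only [one_pow, mul_one]
    rw [Finset.sum_range_succ']
    have hppred : p = (p - 1) + 1 := by omega
    have hlast : ∑ i ∈ range p, (PowerSeries.X * B) ^ (i + 1)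
          * ((p.choose (i + 1) : ℕ) : PowerSeries R)
        = (∑ i ∈ range (p - 1), (PowerSeries.X * B) ^ (i + 1)
          * ((p.choose (i + 1) : ℕ) : PowerSeries R)) + (PowerSeries.X * B) ^ p := by
      conv_lhs => rw [hppred, Finset.sum_range_succ]
      rw [← hppred]
      simp [Nat.choose_self]
    rw [hlast]
    have hterm : ∀ i ∈ range (p - 1),
        (PowerSeries.X * B) ^ (i + 1) * ((p.choose (i + 1) : ℕ) : PowerSeries R)
          = (p : PowerSeries R) * PowerSeries.X *
            ((PowerSeries.X * B) ^ i * B * ((p.choose (i + 1) / p : ℕ) : PowerSeries R)) := by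
      intro i hi
      have hi' : i + 1 < p := by simp at hi; omega
      have hdvd : p ∣ p.choose (i + 1) := hp.dvd_choose_self (by omega) hi'
      have hc : p * (p.choose (i + 1) / p) = p.choose (i + 1) :=
        Nat.mul_div_cancel' hdvd
      have : ((p.choose (i + 1) : ℕ) : PowerSeries R)
          = (p : PowerSeries R) * ((p.choose (i + 1) / p : ℕ) : PowerSeries R) := by
        rw [← Nat.cast_mul, hc]
      rw [this]; ring
    rw [Finset.sum_congr rfl hterm, ← Finset.mul_sum, mul_pow]
    simp [Nat.choose_zero_right]
    ring
  rw [hfg, add_pow]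
  rw [map_sum]
  apply Finset.dvd_sum
  intro j hj
  simp only [Finset.mem_range] at hj
  by_cases hjlam : lam ≤ j
  · -- p^lam divides the term
    have hdvd : (PowerSeries.C (R := R) ((p : R) ^ lam)) ∣
        ((p : PowerSeries R) * PowerSeries.X * f) ^ j
          * (PowerSeries.X ^ p * g) ^ (m - j) * ((m.choose j : ℕ) : PowerSeries R) := by
      have h1 : (PowerSeries.C (R := R) ((p : R) ^ lam)) ∣ (p : PowerSeries R) ^ j := by
        have : (p : PowerSeries R) = PowerSeries.C (R := R) (p : R) := by
          simp
        rw [this, ← map_pow]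
        exact ⟨PowerSeries.C (R := R) ((p : R) ^ (j - lam)), by
          rw [← map_mul, ← pow_add]
          congr 2
          omega⟩
      calc (PowerSeries.C (R := R) ((p : R) ^ lam)) ∣ (p : PowerSeries R) ^ j := h1
        _ ∣ _ := by
          refine Dvd.dvd.mul_right (Dvd.dvd.mul_right ?_ _) _
          rw [mul_pow, mul_pow]
          exact (dvd_mul_right _ _).mul_right _
    obtain ⟨w, hw⟩ := hdvd
    rw [hw, PowerSeries.coeff_C_mul]
    exact Dvd.intro _ rfl
  · -- coefficient is zero since the q-order is too big
    push_neg at hjlam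
    have hX : (PowerSeries.X : PowerSeries R) ^ (j + p * (m - j)) ∣
        ((p : PowerSeries R) * PowerSeries.X * f) ^ j
          * (PowerSeries.X ^ p * g) ^ (m - j) * ((m.choose j : ℕ) : PowerSeries R) := by
      rw [pow_add]
      refine Dvd.dvd.mul_right (mul_dvd_mul ?_ ?_) _
      · rw [mul_pow, mul_pow]
        exact (dvd_mul_left _ _).mul_right _
      · rw [mul_pow, ← pow_mul]
        exact dvd_mul_right _ _
    have hlt : n < j + p * (m - j) := by
      have hjm : j ≤ m := by omega
      have hmj : ((m - j : ℕ) : ℤ) = (m : ℤ) - j := by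
        push_cast [hjm]; ring
      have hgoal : (n : ℤ) < (j : ℤ) + (p : ℤ) * ((m : ℤ) - j) := by
        have hp2' : (2 : ℤ) ≤ p := by exact_mod_cast hp2
        have hjl : (j : ℤ) < (lam : ℤ) := by exact_mod_cast hjlam
        have hml : (lam : ℤ) ≤ m := by exact_mod_cast hm
        nlinarith [hn, hjl, hml, hp2']
      have hfin : (n : ℤ) < (j : ℤ) + (p : ℤ) * ((m - j : ℕ) : ℤ) := by
        rw [hmj]; exact hgoal
      exact_mod_cast hfin
    rw [PowerSeries.X_pow_dvd_iff.mp hX n hlt]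
    exact dvd_zero _
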